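/- Let s₁, s₂ ∈ ℂ be nonzero and u ∈ ℂ. Define A = [[s₁, 1], [0, s₁⁻¹]], B = [[s₂, 0], [u, s₂⁻¹]], C = B·A·B⁻¹·A⁻¹, D = A⁻¹·B⁻¹·A·B, and let v = tr(C). Let S : ℤ → ℂ satisfy S(0) = 1, S(1) = v, and S(k+1) = v·S(k) − S(k−1) for every integer k. Suppose n is a natural number with S(n−1) = 0. Then the (1,1) entry of Cⁿ·A·Dⁿ equals s₁, and the (1,1) entry of (A·B·A⁻¹·B⁻¹)ⁿ·B·(B⁻¹·A⁻¹·B·A)ⁿ equals s₂. -/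

import Mathlib

section Aux

variable (v : ℂ) (S : ℤ → ℂ)

lemma chebS_neg_one (h0 : S 0 = 1) (h1 : S 1 = v)
    (hrec : ∀ k : ℤ, S (k + 1) = v * S k - S (k - 1)) : S (-1) = 0 := by
  have h := hrec 0
  norm_num [h0, h1] at h
  linear_combination h

lemma chebS_sq (h0 : S 0 = 1) (h1 : S 1 = v)
    (hrec : ∀ k : ℤ, S (k + 1) = v * S k - S (k - 1)) :
    ∀ m : ℕ, S m ^ 2 - S ((m : ℤ) + 1) * S ((m : ℤ) - 1) = 1 := by
  intro m
  induction m with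
  | zero =>
      have hneg := chebS_neg_one v S h0 h1 hrec
      norm_num [h0, h1, hneg]
  | succ m ih =>
      have h1' := hrec ((m : ℤ) + 1)
      have h2' := hrec (m : ℤ)
      push_cast
      simp only [add_sub_cancel_right] at h1' ⊢
      linear_combination ih + S ((m : ℤ) + 1) * h2' - S (m : ℤ) * h1'

lemma pow_chebS (h0 : S 0 = 1) (h1 : S 1 = v)
    (hrec : ∀ k : ℤ, S (k + 1) = v * S k - S (k - 1))
    (M : Matrix (Fin 2) (Fin 2) ℂ) (hM : M * M = v • M - 1) :
    ∀ m : ℕ, M ^ (m + 1) = S m • M - S ((m : ℤ) - 1) • 1 := by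
  intro m
  induction m with
  | zero =>
      have hneg := chebS_neg_one v S h0 h1 hrec
      norm_num [h0, hneg]
  | succ m ih =>
      have hr := hrec (m : ℤ)
      rw [pow_succ, ih, sub_mul, Matrix.smul_mul, Matrix.smul_mul, one_mul, hM]
      push_cast
      simp only [add_sub_cancel_right]
      rw [hr]
      module

lemma ch2 (M : Matrix (Fin 2) (Fin 2) ℂ) (h : M.det = 1) :
    M * M = M.trace • M - 1 := by
  rw [Matrix.det_fin_two] at h
  ext i j
  fin_cases i <;> fin_cases j <;>
    simp [Matrix.mul_apply, Fin.sum_univ_two, Matrix.trace_fin_two,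
      Matrix.one_apply, Matrix.smul_apply] <;>
    first
      | ring1
      | linear_combination -h

lemma trace_inv_eq (M : Matrix (Fin 2) (Fin 2) ℂ) (h : M.det = 1) :
    Matrix.trace M⁻¹ = Matrix.trace M := by
  rw [Matrix.inv_def, h]
  rw [Matrix.eta_fin_two M] at *
  simp [Matrix.adjugate_fin_two, Matrix.trace_fin_two]
  ring

end Aux

theorem w11_on_nonCanonical_components
    (s₁ s₂ u : ℂ) (hs₁ : s₁ ≠ 0) (hs₂ : s₂ ≠ 0)
    (A B C D : Matrix (Fin 2) (Fin 2) ℂ)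
    (hA : A = !![s₁, 1; 0, s₁⁻¹]) (hB : B = !![s₂, 0; u, s₂⁻¹])
    (hC : C = B * A * B⁻¹ * A⁻¹) (hD : D = A⁻¹ * B⁻¹ * A * B)
    (v : ℂ) (hv : v = Matrix.trace C)
    (S : ℤ → ℂ)
    (h0 : S 0 = 1) (h1 : S 1 = v)
    (hrec : ∀ k : ℤ, S (k + 1) = v * S k - S (k - 1))
    (n : ℕ) (hS : S ((n : ℤ) - 1) = 0) :
    (C ^ n * A * D ^ n) 0 0 = s₁ ∧
    ((A * B * A⁻¹ * B⁻¹) ^ n * B * (B⁻¹ * A⁻¹ * B * A) ^ n) 0 0 = s₂ := by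
  -- determinants
  have detA : A.det = 1 := by
    rw [hA, Matrix.det_fin_two_of]
    field_simp
    simp
  have detB : B.det = 1 := by
    rw [hB, Matrix.det_fin_two_of]
    field_simp
    simp
  have hdA : IsUnit A.det := by rw [detA]; exact isUnit_one
  have hdB : IsUnit B.det := by rw [detB]; exact isUnit_one
  have detAinv : A⁻¹.det = 1 := by rw [Matrix.det_nonsing_inv, detA]; simp
  have detBinv : B⁻¹.det = 1 := by rw [Matrix.det_nonsing_inv, detB]; simp
  have detC : C.det = 1 := by
    rw [hC, Matrix.det_mul, Matrix.det_mul, Matrix.det_mul,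
      detA, detB, detAinv, detBinv]
    norm_num
  have detD : D.det = 1 := by
    rw [hD, Matrix.det_mul, Matrix.det_mul, Matrix.det_mul,
      detA, detB, detAinv, detBinv]
    norm_num
  have detC' : (A * B * A⁻¹ * B⁻¹).det = 1 := by
    rw [Matrix.det_mul, Matrix.det_mul, Matrix.det_mul,
      detA, detB, detAinv, detBinv]
    norm_num
  have detD' : (B⁻¹ * A⁻¹ * B * A).det = 1 := by
    rw [Matrix.det_mul, Matrix.det_mul, Matrix.det_mul,
      detA, detB, detAinv, detBinv]
    norm_num
  -- C' is the inverse of C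
  have hCinv : C⁻¹ = A * B * A⁻¹ * B⁻¹ := by
    apply Matrix.inv_eq_right_inv
    rw [hC]
    simp only [mul_assoc]
    rw [Matrix.nonsing_inv_mul_cancel_left _ _ hdA,
      Matrix.nonsing_inv_mul_cancel_left _ _ hdB,
      Matrix.mul_nonsing_inv_cancel_left _ _ hdA,
      Matrix.mul_nonsing_inv _ hdB]
  -- trace identities
  have trC' : Matrix.trace (A * B * A⁻¹ * B⁻¹) = v := by
    rw [← hCinv, trace_inv_eq C detC, hv]
  have trD : Matrix.trace D = v := by
    rw [hD, mul_assoc (A⁻¹ * B⁻¹) A B, Matrix.trace_mul_comm, ← mul_assoc]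
    exact trC'
  have trD' : Matrix.trace (B⁻¹ * A⁻¹ * B * A) = v := by
    rw [mul_assoc (B⁻¹ * A⁻¹) B A, Matrix.trace_mul_comm, ← mul_assoc, ← hC, hv]
  -- Cayley–Hamilton forms
  have hMC : C * C = v • C - 1 := by rw [ch2 C detC, ← hv]
  have hMD : D * D = v • D - 1 := by rw [ch2 D detD, trD]
  have hMC' : (A * B * A⁻¹ * B⁻¹) * (A * B * A⁻¹ * B⁻¹)
      = v • (A * B * A⁻¹ * B⁻¹) - 1 := by rw [ch2 _ detC', trC']
  have hMD' : (B⁻¹ * A⁻¹ * B * A) * (B⁻¹ * A⁻¹ * B * A)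
      = v • (B⁻¹ * A⁻¹ * B * A) - 1 := by rw [ch2 _ detD', trD']
  -- handle n = 0
  rcases n with _ | m
  · constructor <;> simp [hA, hB]
  -- now n = m + 1
  have hSm : S (m : ℤ) = 0 := by
    have e : ((m + 1 : ℕ) : ℤ) - 1 = (m : ℤ) := by push_cast; ring
    rwa [e] at hS
  have hsq : S ((m : ℤ) - 1) ^ 2 = 1 := by
    have hid := chebS_sq v S h0 h1 hrec m
    have hr := hrec (m : ℤ)
    rw [hSm] at hid hr
    rw [hr] at hid
    linear_combination hid
  set t := S ((m : ℤ) - 1) with ht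
  have key : ∀ M : Matrix (Fin 2) (Fin 2) ℂ, M * M = v • M - 1 →
      M ^ (m + 1) = (-t) • 1 := by
    intro M hM
    rw [pow_chebS v S h0 h1 hrec M hM m, hSm, zero_smul, zero_sub, ← ht, neg_smul]
  have e1 : ∀ X : Matrix (Fin 2) (Fin 2) ℂ,
      ((-t) • (1 : Matrix (Fin 2) (Fin 2) ℂ)) * X * ((-t) • 1) = X := by
    intro X
    rw [Matrix.smul_mul, Matrix.mul_smul, one_mul, Matrix.mul_one, smul_smul]
    have h2 : (-t) * (-t) = 1 := by rw [neg_mul_neg, ← sq, hsq]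
    rw [h2, one_smul]
  constructor
  · rw [key C hMC, key D hMD, e1, hA]
    simp
  · rw [key _ hMC', key _ hMD', e1, hB]
    simp
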